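/- Let X ~ N(μ,σ²) and U ~ N(0,τ²) be independent. Then P(X + U ∈ T) > 0 and, for every x ∈ ℝ, the conditional c.d.f. satisfies P(X ≤ x | X + U ∈ T) = ∫_{−∞}^x (1/σ)·φ((u−μ)/σ)·[Σ_{i=1}^k (Φ((b_i−u)/τ) − Φ((a_i−u)/τ))] / [Σ_{i=1}^k (Φ((b_i−μ)/√(σ²+τ²)) − Φ((a_i−μ)/√(σ²+τ²)))] du; i.e., the conditional distribution of X given {X+U ∈ T} has Lebesgue density f_μ. -/

import Mathlib

open MeasureTheory ProbabilityTheory Set Filter Topology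

noncomputable def stdphi (x : ℝ) : ℝ := Real.exp (-(x ^ 2) / 2) / Real.sqrt (2 * Real.pi)

noncomputable def stdPhi (x : ℝ) : ℝ := ∫ t in Iic x, stdphi t

noncomputable def stdPhiInv : ℝ → ℝ := Function.invFun stdPhi

noncomputable def stdPhiE (c : EReal) (x s : ℝ) : ℝ :=
  if c = ⊤ then 1 else if c = ⊥ then 0 else stdPhi ((c.toReal - x) / s)

def truncOrdered {k : ℕ} (a b : Fin k → EReal) : Prop :=
  (∀ i, a i < b i) ∧ ∀ i j : Fin k, i < j → b i < a j

def truncSet {k : ℕ} (a b : Fin k → EReal) : Set ℝ :=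
  {x : ℝ | ∃ i, a i < (x : EReal) ∧ (x : EReal) < b i}

noncomputable def truncSum {k : ℕ} (a b : Fin k → EReal) (s x : ℝ) : ℝ :=
  ∑ i, (stdPhiE (b i) x s - stdPhiE (a i) x s)

noncomputable def condPDF {k : ℕ} (a b : Fin k → EReal) (σ τ μ x : ℝ) : ℝ :=
  (1 / σ) * stdphi ((x - μ) / σ) * truncSum a b τ x
    / truncSum a b (Real.sqrt (σ ^ 2 + τ ^ 2)) μ

noncomputable def Fmu {k : ℕ} (a b : Fin k → EReal) (σ τ μ x : ℝ) : ℝ :=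
  ∫ u in Iic x, condPDF a b σ τ μ u

/-- `G_μ(x,v) = Φ((x - (ρ²μ + (1-ρ²)v))/(σρ))` with `ρ² = τ²/(σ²+τ²)`. -/
noncomputable def Gfun (σ τ μ x v : ℝ) : ℝ :=
  stdPhi ((x - (τ ^ 2 / (σ ^ 2 + τ ^ 2) * μ + (1 - τ ^ 2 / (σ ^ 2 + τ ^ 2)) * v)) /
    (σ * Real.sqrt (τ ^ 2 / (σ ^ 2 + τ ^ 2))))

/-- `G_μ(x,v)` for an extended-real `v`, with the natural conventions at `±∞`. -/
noncomputable def GfunE (σ τ μ x : ℝ) (c : EReal) : ℝ :=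
  if c = ⊤ then 0 else if c = ⊥ then 1 else Gfun σ τ μ x c.toReal

/-- `h(v)` from Lemma `le_dmu_formula`. -/
noncomputable def hfun {k : ℕ} (a b : Fin k → EReal) (σ τ μ v : ℝ) : ℝ :=
  (1 / Real.sqrt (σ ^ 2 + τ ^ 2)) * stdphi ((v - μ) / Real.sqrt (σ ^ 2 + τ ^ 2)) /
    truncSum a b (Real.sqrt (σ ^ 2 + τ ^ 2)) μ

/-- `h(v)` for an extended-real `v`, with the convention `φ(±∞) = 0`. -/
noncomputable def hfunE {k : ℕ} (a b : Fin k → EReal) (σ τ μ : ℝ) (c : EReal) : ℝ :=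
  if c = ⊤ then 0 else if c = ⊥ then 0 else hfun a b σ τ μ c.toReal

/-- `l(x,v)` from Lemma `le_dens_dx`. -/
noncomputable def lfun {k : ℕ} (a b : Fin k → EReal) (τ x v : ℝ) : ℝ :=
  (1 / τ) * stdphi ((v - x) / τ) / truncSum a b τ x

/-- `l(x,v)` for an extended-real `v`, with the convention `φ(±∞) = 0`. -/
noncomputable def lfunE {k : ℕ} (a b : Fin k → EReal) (τ x : ℝ) (c : EReal) : ℝ :=
  if c = ⊤ then 0 else if c = ⊥ then 0 else lfun a b τ x c.toReal

/-- The function `B_μ(x)` from the proof of Proposition 1. -/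
noncomputable def Bfun {k : ℕ} (a b : Fin k → EReal) (σ τ μ x : ℝ) : ℝ :=
  Real.sqrt (τ ^ 2 / (σ ^ 2 + τ ^ 2)) / σ * stdphi (stdPhiInv (Fmu a b σ τ μ x))
    - condPDF a b σ τ μ x
    + ∑ i, (hfunE a b σ τ μ (b i) * (Fmu a b σ τ μ x - GfunE σ τ μ x (b i))
        - hfunE a b σ τ μ (a i) * (Fmu a b σ τ μ x - GfunE σ τ μ x (a i)))

section Aux

lemma stdphi_eq : stdphi = gaussianPDFReal 0 1 := by
  ext x
  simp [stdphi, gaussianPDFReal, div_eq_inv_mul, mul_comm, neg_div]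

lemma stdphi_pos (x : ℝ) : 0 < stdphi x := by
  rw [stdphi_eq]; exact gaussianPDFReal_pos 0 1 x one_ne_zero

lemma integrable_stdphi : Integrable stdphi := by
  rw [stdphi_eq]; exact integrable_gaussianPDFReal 0 1

lemma integral_stdphi : ∫ x, stdphi x = 1 := by
  rw [stdphi_eq]; exact integral_gaussianPDFReal_eq_one 0 one_ne_zero

lemma stdPhi_nonneg (x : ℝ) : 0 ≤ stdPhi x :=
  integral_nonneg fun t => (stdphi_pos t).le

lemma support_stdphi : Function.support stdphi = Set.univ := by
  ext t; simp [Function.support, (stdphi_pos t).ne']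

lemma stdPhi_pos (x : ℝ) : 0 < stdPhi x := by
  rw [stdPhi, setIntegral_pos_iff_support_of_nonneg_ae
    (Filter.Eventually.of_forall fun t => (stdphi_pos t).le) integrable_stdphi.integrableOn]
  rw [support_stdphi, univ_inter]
  simp [Real.volume_Iic]

lemma stdPhi_mono : Monotone stdPhi := by
  intro x y hxy
  exact setIntegral_mono_set integrable_stdphi.integrableOn
    (Filter.Eventually.of_forall fun t => (stdphi_pos t).le)
    (HasSubset.Subset.eventuallyLE (Iic_subset_Iic.2 hxy))

lemma stdPhi_add_Ioi (x : ℝ) : stdPhi x + ∫ t in Ioi x, stdphi t = 1 := by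
  rw [stdPhi, intervalIntegral.integral_Iic_add_Ioi integrable_stdphi.integrableOn
    integrable_stdphi.integrableOn, integral_stdphi]

lemma integral_Ioi_stdphi_pos (x : ℝ) : 0 < ∫ t in Ioi x, stdphi t := by
  rw [setIntegral_pos_iff_support_of_nonneg_ae
    (Filter.Eventually.of_forall fun t => (stdphi_pos t).le) integrable_stdphi.integrableOn]
  rw [support_stdphi, univ_inter]
  simp [Real.volume_Ioi]

lemma stdPhi_lt_one (x : ℝ) : stdPhi x < 1 := by
  have := stdPhi_add_Ioi x
  have h2 := integral_Ioi_stdphi_pos x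
  linarith

lemma stdPhi_le_one (x : ℝ) : stdPhi x ≤ 1 := (stdPhi_lt_one x).le

lemma stdPhi_strictMono : StrictMono stdPhi := by
  intro x y hxy
  have h1 : stdPhi y - stdPhi x = ∫ t in Ioc x y, stdphi t := by
    rw [stdPhi, stdPhi, ← integral_diff measurableSet_Iic integrable_stdphi.integrableOn
      (Iic_subset_Iic.2 hxy.le), Iic_sdiff_Iic]
  have h2 : 0 < ∫ t in Ioc x y, stdphi t := by
    rw [setIntegral_pos_iff_support_of_nonneg_ae
      (Filter.Eventually.of_forall fun t => (stdphi_pos t).le) integrable_stdphi.integrableOn]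
    rw [support_stdphi, univ_inter]
    simp [Real.volume_Ioc, hxy]
  linarith

lemma gaussianPDFReal_eq (m sd : ℝ) (hsd : 0 < sd) (t : ℝ) :
    gaussianPDFReal m ((sd ^ 2).toNNReal) t = (1 / sd) * stdphi ((t - m) / sd) := by
  rw [gaussianPDFReal, stdphi]
  have h2 : ((sd ^ 2).toNNReal : ℝ) = sd ^ 2 := Real.coe_toNNReal _ (sq_nonneg sd)
  rw [h2]
  have h3 : Real.sqrt (2 * Real.pi * sd ^ 2) = Real.sqrt (2 * Real.pi) * sd := by
    rw [Real.sqrt_mul (by positivity), Real.sqrt_sq hsd.le]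
  rw [h3]
  have h4 : (-((t - m) / sd) ^ 2 / 2) = - (t-m)^2 / (2 * sd ^ 2) := by
    rw [div_pow, neg_div, div_div]
    rw [mul_comm (sd^2) 2, neg_div]
  rw [h4]
  field_simp
  try ring

lemma image_affine (m sd : ℝ) (hsd : 0 < sd) (c : ℝ) :
    (fun r => m + sd * r) '' Iic ((c - m) / sd) = Iic c := by
  ext t
  simp only [mem_image, mem_Iic]
  constructor
  · rintro ⟨r, hr, rfl⟩
    have : sd * r ≤ sd * ((c - m) / sd) := by nlinarith
    rw [mul_div_cancel₀ _ hsd.ne'] at this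
    linarith
  · intro ht
    refine ⟨(t - m) / sd, by gcongr, by field_simp; ring⟩

lemma gauss_cdf (m sd : ℝ) (hsd : 0 < sd) (c : ℝ) :
    ∫ t in Iic c, gaussianPDFReal m ((sd ^ 2).toNNReal) t = stdPhi ((c - m) / sd) := by
  have hd : ∀ x : ℝ, HasDerivAt (fun r => m + sd * r) sd x := fun x => by
    simpa using ((hasDerivAt_id x).const_mul sd).const_add m
  have key : ∫ t in (fun r => m + sd * r) '' Iic ((c - m) / sd),
      gaussianPDFReal m ((sd ^ 2).toNNReal) t
      = ∫ r in Iic ((c - m) / sd), |sd| • gaussianPDFReal m ((sd ^ 2).toNNReal) (m + sd * r) := by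
    apply integral_image_eq_integral_abs_deriv_smul measurableSet_Iic
      (fun x _ => (hd x).hasDerivWithinAt)
    intro x _ y _ h
    simp only at h
    exact mul_left_cancel₀ hsd.ne' (by linarith : sd * x = sd * y)
  rw [image_affine m sd hsd c] at key
  rw [key, stdPhi]
  apply setIntegral_congr_fun measurableSet_Iic
  intro r _
  show |sd| • gaussianPDFReal m ((sd ^ 2).toNNReal) (m + sd * r) = stdphi r
  rw [gaussianPDFReal_eq m sd hsd, smul_eq_mul, abs_of_pos hsd,
    show m + sd * r - m = sd * r by ring, mul_comm sd r, mul_div_cancel_right₀ r hsd.ne']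
  field_simp
  try ring

lemma gauss_product (σ τ : ℝ) (hσ : 0 < σ) (hτ : 0 < τ) (μ t u : ℝ) :
    gaussianPDFReal μ ((σ ^ 2).toNNReal) u * gaussianPDFReal u ((τ ^ 2).toNNReal) t
    = gaussianPDFReal μ (((Real.sqrt (σ ^ 2 + τ ^ 2)) ^ 2).toNNReal) t
      * gaussianPDFReal ((τ ^ 2 * μ + σ ^ 2 * t) / (σ ^ 2 + τ ^ 2))
          (((σ * τ / Real.sqrt (σ ^ 2 + τ ^ 2)) ^ 2).toNNReal) u := by
  have hs2 : 0 < σ ^ 2 + τ ^ 2 := by positivity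
  set s : ℝ := Real.sqrt (σ ^ 2 + τ ^ 2) with hs_def
  have hs : 0 < s := Real.sqrt_pos.2 hs2
  have hss : s ^ 2 = σ ^ 2 + τ ^ 2 := Real.sq_sqrt hs2.le
  set w : ℝ := σ * τ / s with hw_def
  have hw : 0 < w := by positivity
  have hww : w ^ 2 = σ ^ 2 * τ ^ 2 / (σ ^ 2 + τ ^ 2) := by
    rw [hw_def, div_pow, hss, mul_pow]
  rw [gaussianPDFReal_eq _ _ hσ, gaussianPDFReal_eq _ _ hτ, gaussianPDFReal_eq _ _ hs,
    gaussianPDFReal_eq _ _ hw]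
  simp only [stdphi]
  rw [div_pow, div_pow, div_pow, div_pow, hss, hww]
  have hexp : Real.exp (-((u - μ) ^ 2 / σ ^ 2) / 2) * Real.exp (-((t - u) ^ 2 / τ ^ 2) / 2)
      = Real.exp (-((t - μ) ^ 2 / (σ ^ 2 + τ ^ 2)) / 2)
        * Real.exp (-((u - (τ ^ 2 * μ + σ ^ 2 * t) / (σ ^ 2 + τ ^ 2)) ^ 2
            / (σ ^ 2 * τ ^ 2 / (σ ^ 2 + τ ^ 2))) / 2) := by
    rw [← Real.exp_add, ← Real.exp_add]
    congr 1
    field_simp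
    ring
  have hsw : s * w = σ * τ := by
    rw [hw_def, mul_div_cancel₀ _ hs.ne']
  set q : ℝ := Real.sqrt (2 * Real.pi) with hq_def
  calc (1/σ) * (Real.exp (-((u - μ) ^ 2 / σ ^ 2) / 2) / q)
        * ((1/τ) * (Real.exp (-((t - u) ^ 2 / τ ^ 2) / 2) / q))
      = (Real.exp (-((u - μ) ^ 2 / σ ^ 2) / 2) * Real.exp (-((t - u) ^ 2 / τ ^ 2) / 2))
        * (1/(σ*τ) * (1/(q*q))) := by ring
    _ = (Real.exp (-((t - μ) ^ 2 / (σ ^ 2 + τ ^ 2)) / 2)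
        * Real.exp (-((u - (τ ^ 2 * μ + σ ^ 2 * t) / (σ ^ 2 + τ ^ 2)) ^ 2
            / (σ ^ 2 * τ ^ 2 / (σ ^ 2 + τ ^ 2))) / 2)) * (1/(σ*τ) * (1/(q*q))) := by rw [hexp]
    _ = (Real.exp (-((t - μ) ^ 2 / (σ ^ 2 + τ ^ 2)) / 2)
        * Real.exp (-((u - (τ ^ 2 * μ + σ ^ 2 * t) / (σ ^ 2 + τ ^ 2)) ^ 2
            / (σ ^ 2 * τ ^ 2 / (σ ^ 2 + τ ^ 2))) / 2)) * (1/(s*w) * (1/(q*q))) := by rw [hsw]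
    _ = _ := by ring

end Aux
section Aux2

lemma stdPhiE_top (m sd : ℝ) : stdPhiE ⊤ m sd = 1 := rfl
lemma stdPhiE_bot (m sd : ℝ) : stdPhiE ⊥ m sd = 0 := rfl
lemma stdPhiE_coe (r m sd : ℝ) : stdPhiE (r : EReal) m sd = stdPhi ((r - m) / sd) := by
  simp [stdPhiE]

lemma stdPhiE_nonneg (c : EReal) (m sd : ℝ) : 0 ≤ stdPhiE c m sd := by
  induction c using EReal.rec with
  | bot => simp [stdPhiE_bot]
  | coe r => rw [stdPhiE_coe]; exact stdPhi_nonneg _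
  | top => simp [stdPhiE_top]

lemma stdPhiE_le_one (c : EReal) (m sd : ℝ) : stdPhiE c m sd ≤ 1 := by
  induction c using EReal.rec with
  | bot => simp [stdPhiE_bot]
  | coe r => rw [stdPhiE_coe]; exact stdPhi_le_one _
  | top => simp [stdPhiE_top]

lemma stdPhiE_lt {c d : EReal} (hcd : c < d) (m : ℝ) {sd : ℝ} (hsd : 0 < sd) :
    stdPhiE c m sd < stdPhiE d m sd := by
  induction c using EReal.rec with
  | top => exact absurd hcd (by simp)
  | bot =>
    induction d using EReal.rec with
    | bot => exact absurd hcd (by simp)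
    | coe r => rw [stdPhiE_bot, stdPhiE_coe]; exact stdPhi_pos _
    | top => rw [stdPhiE_bot, stdPhiE_top]; norm_num
  | coe p =>
    induction d using EReal.rec with
    | bot => exact absurd hcd (by simp)
    | coe r =>
      rw [stdPhiE_coe, stdPhiE_coe]
      have hpr : p < r := EReal.coe_lt_coe_iff.1 hcd
      exact stdPhi_strictMono (by gcongr)
    | top => rw [stdPhiE_coe, stdPhiE_top]; exact stdPhi_lt_one _
lemma stdPhiE_le {c d : EReal} (hcd : c ≤ d) (m : ℝ) {sd : ℝ} (hsd : 0 < sd) :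
    stdPhiE c m sd ≤ stdPhiE d m sd := by
  rcases eq_or_lt_of_le hcd with rfl | h
  · exact le_rfl
  · exact (stdPhiE_lt h m hsd).le

lemma antitone_stdPhiE (c : EReal) (sd : ℝ) (hsd : 0 < sd) :
    Antitone (fun m => stdPhiE c m sd) := by
  induction c using EReal.rec with
  | bot => simp only [stdPhiE_bot]; exact antitone_const
  | top => simp only [stdPhiE_top]; exact antitone_const
  | coe r =>
    simp only [stdPhiE_coe]
    intro x y hxy
    exact stdPhi_mono (by gcongr)

lemma measurable_stdPhiE (c : EReal) (sd : ℝ) (hsd : 0 < sd) :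
    Measurable (fun m => stdPhiE c m sd) :=
  (antitone_stdPhiE c sd hsd).measurable

lemma measurable_truncSum {k : ℕ} (a b : Fin k → EReal) (sd : ℝ) (hsd : 0 < sd) :
    Measurable (fun x => truncSum a b sd x) := by
  unfold truncSum
  exact Finset.measurable_sum _ fun i _ =>
    (measurable_stdPhiE (b i) sd hsd).sub (measurable_stdPhiE (a i) sd hsd)

lemma truncSum_nonneg {k : ℕ} (a b : Fin k → EReal) (hab : truncOrdered a b)
    {sd : ℝ} (hsd : 0 < sd) (x : ℝ) : 0 ≤ truncSum a b sd x :=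
  Finset.sum_nonneg fun i _ => sub_nonneg.2 (stdPhiE_le (hab.1 i).le x hsd)

lemma truncSum_le {k : ℕ} (a b : Fin k → EReal) {sd : ℝ} (hsd : 0 < sd) (x : ℝ) :
    truncSum a b sd x ≤ k := by
  calc truncSum a b sd x ≤ ∑ _i : Fin k, (1:ℝ) :=
        Finset.sum_le_sum fun i _ => by
          have h1 := stdPhiE_le_one (b i) x sd
          have h2 := stdPhiE_nonneg (a i) x sd
          show stdPhiE (b i) x sd - stdPhiE (a i) x sd ≤ 1
          linarith
    _ = k := by simp

lemma truncSum_pos {k : ℕ} (a b : Fin (k+1) → EReal) (hab : truncOrdered a b)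
    {sd : ℝ} (hsd : 0 < sd) (x : ℝ) : 0 < truncSum a b sd x := by
  apply Finset.sum_pos' (fun i _ => sub_nonneg.2 (stdPhiE_le (hab.1 i).le x hsd))
  exact ⟨0, Finset.mem_univ _, sub_pos.2 (stdPhiE_lt (hab.1 0) x hsd)⟩

end Aux2
section Aux3

lemma gauss_var_ne (sd : ℝ) (hsd : 0 < sd) : ((sd ^ 2).toNNReal : NNReal) ≠ 0 := by
  simp only [ne_eq, Real.toNNReal_eq_zero, not_le]
  positivity

lemma gauss_measure_Iic (m sd : ℝ) (hsd : 0 < sd) (r : ℝ) :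
    gaussianReal m ((sd ^ 2).toNNReal) (Iic r) = ENNReal.ofReal (stdPhi ((r - m) / sd)) := by
  rw [gaussianReal_apply_eq_integral m (gauss_var_ne sd hsd), gauss_cdf m sd hsd r]

lemma gauss_measure_singleton (m sd : ℝ) (hsd : 0 < sd) (r : ℝ) :
    gaussianReal m ((sd ^ 2).toNNReal) {r} = 0 := by
  rw [gaussianReal_apply_eq_integral m (gauss_var_ne sd hsd)]
  rw [Measure.restrict_eq_zero.2 (by simp), integral_zero_measure]
  simp

lemma gauss_measure_Iio (m sd : ℝ) (hsd : 0 < sd) (r : ℝ) :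
    gaussianReal m ((sd ^ 2).toNNReal) (Iio r) = ENNReal.ofReal (stdPhi ((r - m) / sd)) := by
  have : Iio r = Iic r \ {r} := by ext t; simp [lt_iff_le_and_ne]
  rw [this, measure_diff_null (gauss_measure_singleton m sd hsd r),
    gauss_measure_Iic m sd hsd r]

lemma gauss_measure_interval (m sd : ℝ) (hsd : 0 < sd) {c d : EReal} (hcd : c < d) :
    gaussianReal m ((sd ^ 2).toNNReal) {x : ℝ | c < (x : EReal) ∧ (x : EReal) < d}
      = ENNReal.ofReal (stdPhiE d m sd - stdPhiE c m sd) := by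
  induction c using EReal.rec with
  | top => exact absurd hcd (by simp)
  | bot =>
    induction d using EReal.rec with
    | bot => exact absurd hcd (by simp)
    | coe r =>
      have hset : {x : ℝ | (⊥ : EReal) < (x : EReal) ∧ (x : EReal) < (r : EReal)} = Iio r := by
        ext t; simp [EReal.coe_lt_coe_iff]
      rw [hset, gauss_measure_Iio m sd hsd, stdPhiE_bot, stdPhiE_coe, sub_zero]
    | top =>
      have hset : {x : ℝ | (⊥ : EReal) < (x : EReal) ∧ (x : EReal) < (⊤ : EReal)} = univ := by
        ext t; simp
      rw [hset, stdPhiE_bot, stdPhiE_top, sub_zero, ENNReal.ofReal_one]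
      exact measure_univ
  | coe p =>
    induction d using EReal.rec with
    | bot => exact absurd hcd (by simp)
    | coe r =>
      have hpr : p < r := EReal.coe_lt_coe_iff.1 hcd
      have hset : {x : ℝ | ((p : EReal)) < (x : EReal) ∧ (x : EReal) < (r : EReal)} = Ioo p r := by
        ext t; simp [EReal.coe_lt_coe_iff]
      have hsub : Iic p ⊆ Iio r := fun t ht => lt_of_le_of_lt ht hpr
      rw [hset, show Ioo p r = Iio r \ Iic p by ext t; simp [and_comm],
        measure_diff hsub measurableSet_Iic.nullMeasurableSet (measure_ne_top _ _),
        gauss_measure_Iio m sd hsd, gauss_measure_Iic m sd hsd, stdPhiE_coe, stdPhiE_coe,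
        ENNReal.ofReal_sub _ (stdPhi_nonneg _)]
    | top =>
      have hset : {x : ℝ | ((p : EReal)) < (x : EReal) ∧ (x : EReal) < (⊤ : EReal)} = Ioi p := by
        ext t; simp [EReal.coe_lt_coe_iff]
      rw [hset, show Ioi p = (Iic p)ᶜ by ext t; simp,
        measure_compl measurableSet_Iic (measure_ne_top _ _), measure_univ,
        gauss_measure_Iic m sd hsd, stdPhiE_top, stdPhiE_coe,
        ENNReal.ofReal_sub _ (stdPhi_nonneg _), ENNReal.ofReal_one]

lemma truncSet_eq_iUnion {k : ℕ} (a b : Fin k → EReal) :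
    truncSet a b = ⋃ i, {x : ℝ | a i < (x : EReal) ∧ (x : EReal) < b i} := by
  ext x; simp [truncSet, mem_iUnion]

lemma measurableSet_interval (c d : EReal) :
    MeasurableSet {x : ℝ | c < (x : EReal) ∧ (x : EReal) < d} := by
  have : {x : ℝ | c < (x : EReal) ∧ (x : EReal) < d}
      = ((↑) : ℝ → EReal) ⁻¹' (Ioo c d) := rfl
  rw [this]
  exact measurable_coe_real_ereal measurableSet_Ioo

lemma measurableSet_truncSet {k : ℕ} (a b : Fin k → EReal) :
    MeasurableSet (truncSet a b) := by
  rw [truncSet_eq_iUnion]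
  exact MeasurableSet.iUnion fun i => measurableSet_interval _ _

lemma truncSet_disjoint {k : ℕ} {a b : Fin k → EReal} (hab : truncOrdered a b) :
    Pairwise (Function.onFun Disjoint
      fun i => {x : ℝ | a i < (x : EReal) ∧ (x : EReal) < b i}) := by
  intro i j hij
  wlog h : i < j generalizing i j
  · exact (this hij.symm (hij.lt_or_gt.resolve_left h)).symm
  refine Set.disjoint_left.2 fun x hxi hxj => ?_
  exact absurd (lt_trans (lt_trans hxi.2 (hab.2 i j h)) hxj.1) (lt_irrefl _)

lemma gauss_measure_truncSet {k : ℕ} (a b : Fin k → EReal) (hab : truncOrdered a b)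
    (m : ℝ) {sd : ℝ} (hsd : 0 < sd) :
    gaussianReal m ((sd ^ 2).toNNReal) (truncSet a b)
      = ENNReal.ofReal (truncSum a b sd m) := by
  rw [truncSet_eq_iUnion,
    measure_iUnion (truncSet_disjoint hab) (fun i => measurableSet_interval _ _),
    tsum_fintype]
  rw [truncSum, ENNReal.ofReal_sum_of_nonneg
    (fun i _ => sub_nonneg.2 (stdPhiE_le (hab.1 i).le m hsd))]
  exact Finset.sum_congr rfl fun i _ => gauss_measure_interval m sd hsd (hab.1 i)

end Aux3
section Aux4

lemma measurable_gauss_pair (v : NNReal) :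
    Measurable (fun p : ℝ × ℝ => gaussianPDFReal p.1 v p.2) := by
  unfold gaussianPDFReal
  fun_prop

lemma integrable_gpdf_mul_stdPhiE (m σ : ℝ) (hσ : 0 < σ) (τ : ℝ) (hτ : 0 < τ) (c : EReal) :
    Integrable (fun u => gaussianPDFReal m ((σ ^ 2).toNNReal) u * stdPhiE c u τ) := by
  apply (integrable_gaussianPDFReal m ((σ ^ 2).toNNReal)).mono'
  · exact ((measurable_gaussianPDFReal m _).mul (measurable_stdPhiE c τ hτ)).aestronglyMeasurable
  · refine Filter.Eventually.of_forall fun u => ?_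
    rw [Real.norm_eq_abs, abs_of_nonneg (mul_nonneg (gaussianPDFReal_nonneg _ _ _)
      (stdPhiE_nonneg _ _ _))]
    calc gaussianPDFReal m ((σ ^ 2).toNNReal) u * stdPhiE c u τ
        ≤ gaussianPDFReal m ((σ ^ 2).toNNReal) u * 1 := by
          apply mul_le_mul_of_nonneg_left (stdPhiE_le_one _ _ _) (gaussianPDFReal_nonneg _ _ _)
      _ = _ := mul_one _

set_option maxHeartbeats 1000000 in
lemma conv_endpoint (σ τ : ℝ) (hσ : 0 < σ) (hτ : 0 < τ) (μ : ℝ) (c : EReal) :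
    ∫ u, gaussianPDFReal μ ((σ ^ 2).toNNReal) u * stdPhiE c u τ
      = stdPhiE c μ (Real.sqrt (σ ^ 2 + τ ^ 2)) := by
  induction c using EReal.rec with
  | bot =>
    simp only [stdPhiE_bot, mul_zero, integral_zero]
  | top =>
    simp only [stdPhiE_top, mul_one]
    exact integral_gaussianPDFReal_eq_one μ (gauss_var_ne σ hσ)
  | coe r =>
    have hs2 : (0:ℝ) < σ ^ 2 + τ ^ 2 := by positivity
    set s : ℝ := Real.sqrt (σ ^ 2 + τ ^ 2) with hs_def
    have hs : 0 < s := Real.sqrt_pos.2 hs2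
    set w : ℝ := σ * τ / s with hw_def
    have hw : 0 < w := by positivity
    set F : ℝ → ℝ → ℝ :=
      fun u t => gaussianPDFReal μ ((σ ^ 2).toNNReal) u * gaussianPDFReal u ((τ ^ 2).toNNReal) t
      with hF_def
    have hmeasF : AEStronglyMeasurable (Function.uncurry F)
        (volume.prod (volume.restrict (Iic r))) := by
      apply Measurable.aestronglyMeasurable
      exact ((measurable_gaussianPDFReal μ _).comp measurable_fst).mul (measurable_gauss_pair _)
    have hint : Integrable (Function.uncurry F) (volume.prod (volume.restrict (Iic r))) := by
      rw [integrable_prod_iff hmeasF]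
      constructor
      · refine Filter.Eventually.of_forall fun u => ?_
        simp only [Function.uncurry_apply_pair]
        exact ((integrable_gaussianPDFReal u ((τ ^ 2).toNNReal)).restrict).const_mul _
      · have heq : ∀ u : ℝ, ∫ t in Iic r, ‖F u t‖
            = gaussianPDFReal μ ((σ ^ 2).toNNReal) u * stdPhi ((r - u) / τ) := by
          intro u
          rw [← gauss_cdf u τ hτ r, ← integral_const_mul]
          refine setIntegral_congr_fun measurableSet_Iic fun t _ => ?_
          rw [Real.norm_eq_abs, abs_of_nonneg
            (mul_nonneg (gaussianPDFReal_nonneg _ _ _) (gaussianPDFReal_nonneg _ _ _))]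
        simp only [Function.uncurry_apply_pair, heq]
        have := integrable_gpdf_mul_stdPhiE μ σ hσ τ hτ ((r : EReal))
        simpa only [stdPhiE_coe] using this
    have swap := integral_integral_swap hint
    have lhs_eq : ∫ u, gaussianPDFReal μ ((σ ^ 2).toNNReal) u * stdPhiE (r : EReal) u τ
        = ∫ u, ∫ t in Iic r, F u t := by
      refine integral_congr_ae (Filter.Eventually.of_forall fun u => ?_)
      show gaussianPDFReal μ ((σ ^ 2).toNNReal) u * stdPhiE (r : EReal) u τ
        = ∫ t in Iic r, F u t
      rw [stdPhiE_coe, ← gauss_cdf u τ hτ r, ← integral_const_mul]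
    rw [lhs_eq, swap]
    have inner_eq : ∀ t : ℝ, ∫ u, F u t
        = gaussianPDFReal μ ((s ^ 2).toNNReal) t := by
      intro t
      have : (fun u => F u t) = fun u =>
          gaussianPDFReal μ ((s ^ 2).toNNReal) t
            * gaussianPDFReal ((τ ^ 2 * μ + σ ^ 2 * t) / (σ ^ 2 + τ ^ 2)) ((w ^ 2).toNNReal) u :=
        funext fun u => gauss_product σ τ hσ hτ μ t u
      rw [this, integral_const_mul, integral_gaussianPDFReal_eq_one _ (gauss_var_ne w hw),
        mul_one]
    rw [show (∫ t in Iic r, ∫ u, F u t) = ∫ t in Iic r, gaussianPDFReal μ ((s ^ 2).toNNReal) t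
      from setIntegral_congr_fun measurableSet_Iic fun t _ => inner_eq t]
    rw [gauss_cdf μ s hs r, stdPhiE_coe]

end Aux4
section Aux5

lemma gpdf_mul_truncSum_eq {k : ℕ} (a b : Fin k → EReal) (μ σ τ : ℝ) :
    (fun u => gaussianPDFReal μ ((σ ^ 2).toNNReal) u * truncSum a b τ u)
      = fun u => ∑ i, (gaussianPDFReal μ ((σ ^ 2).toNNReal) u * stdPhiE (b i) u τ
          - gaussianPDFReal μ ((σ ^ 2).toNNReal) u * stdPhiE (a i) u τ) := by
  funext u
  rw [truncSum, Finset.mul_sum]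
  exact Finset.sum_congr rfl fun i _ => mul_sub _ _ _

lemma integrable_gpdf_mul_truncSum {k : ℕ} (a b : Fin k → EReal) (μ : ℝ) {σ τ : ℝ}
    (hσ : 0 < σ) (hτ : 0 < τ) :
    Integrable (fun u => gaussianPDFReal μ ((σ ^ 2).toNNReal) u * truncSum a b τ u) := by
  rw [gpdf_mul_truncSum_eq]
  exact integrable_finset_sum _ fun i _ =>
    (integrable_gpdf_mul_stdPhiE μ σ hσ τ hτ (b i)).sub
      (integrable_gpdf_mul_stdPhiE μ σ hσ τ hτ (a i))

lemma conv_truncSum {k : ℕ} (a b : Fin k → EReal) (μ : ℝ) {σ τ : ℝ}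
    (hσ : 0 < σ) (hτ : 0 < τ) :
    ∫ u, gaussianPDFReal μ ((σ ^ 2).toNNReal) u * truncSum a b τ u
      = truncSum a b (Real.sqrt (σ ^ 2 + τ ^ 2)) μ := by
  rw [gpdf_mul_truncSum_eq, integral_finset_sum (f := fun i u =>
      gaussianPDFReal μ ((σ ^ 2).toNNReal) u * stdPhiE (b i) u τ
        - gaussianPDFReal μ ((σ ^ 2).toNNReal) u * stdPhiE (a i) u τ) _ fun i _ =>
    (integrable_gpdf_mul_stdPhiE μ σ hσ τ hτ (b i)).sub
      (integrable_gpdf_mul_stdPhiE μ σ hσ τ hτ (a i))]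
  rw [truncSum]
  refine Finset.sum_congr rfl fun i _ => ?_
  rw [integral_sub (integrable_gpdf_mul_stdPhiE μ σ hσ τ hτ (b i))
    (integrable_gpdf_mul_stdPhiE μ σ hσ τ hτ (a i)),
    conv_endpoint σ τ hσ hτ μ (b i), conv_endpoint σ τ hσ hτ μ (a i)]

lemma kernel_trunc {k : ℕ} (a b : Fin k → EReal) (hab : truncOrdered a b) {τ : ℝ}
    (hτ : 0 < τ) (u : ℝ) :
    gaussianReal 0 ((τ ^ 2).toNNReal) {t : ℝ | u + t ∈ truncSet a b}
      = ENNReal.ofReal (truncSum a b τ u) := by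
  have : {t : ℝ | u + t ∈ truncSet a b} = (u + ·) ⁻¹' truncSet a b := rfl
  rw [this, ← Measure.map_apply (measurable_const_add u) (measurableSet_truncSet a b),
    gaussianReal_map_const_add u, zero_add, gauss_measure_truncSet a b hab u hτ]

lemma prod_measure_trunc {k : ℕ} (a b : Fin k → EReal) (hab : truncOrdered a b)
    (μ : ℝ) {σ τ : ℝ} (hσ : 0 < σ) (hτ : 0 < τ) {D : Set ℝ} (hD : MeasurableSet D) :
    ((gaussianReal μ ((σ ^ 2).toNNReal)).prod (gaussianReal 0 ((τ ^ 2).toNNReal)))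
        {p : ℝ × ℝ | p.1 ∈ D ∧ p.1 + p.2 ∈ truncSet a b}
      = ENNReal.ofReal (∫ u in D, gaussianPDFReal μ ((σ ^ 2).toNNReal) u
          * truncSum a b τ u) := by
  have hSmeas : MeasurableSet {p : ℝ × ℝ | p.1 ∈ D ∧ p.1 + p.2 ∈ truncSet a b} :=
    (measurable_fst hD).inter
      ((measurable_fst.add measurable_snd) (measurableSet_truncSet a b))
  rw [Measure.prod_apply hSmeas]
  have hfun : ∫⁻ u, gaussianReal 0 ((τ ^ 2).toNNReal)
        (Prod.mk u ⁻¹' {p : ℝ × ℝ | p.1 ∈ D ∧ p.1 + p.2 ∈ truncSet a b})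
        ∂(gaussianReal μ ((σ ^ 2).toNNReal))
      = ∫⁻ u, D.indicator (fun u => ENNReal.ofReal (truncSum a b τ u)) u
        ∂(gaussianReal μ ((σ ^ 2).toNNReal)) := by
    refine lintegral_congr fun u => ?_
    by_cases hu : u ∈ D
    · rw [Set.indicator_of_mem hu, ← kernel_trunc a b hab hτ u]
      congr 1
      ext t; simp [hu]
    · rw [Set.indicator_of_notMem hu,
        show (Prod.mk u ⁻¹' {p : ℝ × ℝ | p.1 ∈ D ∧ p.1 + p.2 ∈ truncSet a b}) = (∅ : Set ℝ) by
          ext t; simp [hu], measure_empty]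
  rw [hfun, lintegral_indicator hD]
  have hν : gaussianReal μ ((σ ^ 2).toNNReal) = volume.withDensity (gaussianPDF μ _) :=
    gaussianReal_of_var_ne_zero μ (gauss_var_ne σ hσ)
  rw [hν, restrict_withDensity hD, lintegral_withDensity_eq_lintegral_mul _
    (measurable_gaussianPDF μ _)
    ((measurable_truncSum a b τ hτ).ennreal_ofReal)]
  rw [ofReal_integral_eq_lintegral_ofReal
    ((integrable_gpdf_mul_truncSum a b μ hσ hτ).restrict)
    (Filter.Eventually.of_forall fun u => mul_nonneg (gaussianPDFReal_nonneg _ _ _)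
      (truncSum_nonneg a b hab hτ u))]
  refine lintegral_congr fun u => ?_
  simp only [Pi.mul_apply, gaussianPDF]
  rw [ENNReal.ofReal_mul (gaussianPDFReal_nonneg _ _ _)]

end Aux5

/-- If `X ~ N(μ,σ²)` and `U ~ N(0,τ²)` are independent, then `P(X + U ∈ T) > 0` and the
conditional c.d.f. of `X` given `X + U ∈ T` is `x ↦ ∫_{-∞}^x f_μ(u) du`. -/
theorem stmt14 {k : ℕ} (a b : Fin (k + 1) → EReal) (hab : truncOrdered a b)
    (σ τ : ℝ) (hσ : 0 < σ) (hτ : 0 < τ) (μ : ℝ)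
    {Ω : Type*} [MeasurableSpace Ω] (P : Measure Ω) [IsProbabilityMeasure P]
    (X U : Ω → ℝ) (hX : Measurable X) (hU : Measurable U) (hindep : IndepFun X U P)
    (hXlaw : Measure.map X P = gaussianReal μ ((σ ^ 2).toNNReal))
    (hUlaw : Measure.map U P = gaussianReal 0 ((τ ^ 2).toNNReal)) :
    0 < P {ω | X ω + U ω ∈ truncSet a b} ∧
    ∀ x : ℝ,
      P[|{ω | X ω + U ω ∈ truncSet a b}] {ω | X ω ≤ x}
        = ENNReal.ofReal (∫ u in Iic x, condPDF a b σ τ μ u) := by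
  have hs2 : (0:ℝ) < σ ^ 2 + τ ^ 2 := by positivity
  have hsq : 0 < Real.sqrt (σ ^ 2 + τ ^ 2) := Real.sqrt_pos.2 hs2
  have hTmeas := measurableSet_truncSet a b
  have hsmeas : MeasurableSet {ω | X ω + U ω ∈ truncSet a b} := (hX.add hU) hTmeas
  have hmap : Measure.map (fun ω => (X ω, U ω)) P
      = (gaussianReal μ ((σ ^ 2).toNNReal)).prod (gaussianReal 0 ((τ ^ 2).toNNReal)) := by
    rw [← hXlaw, ← hUlaw]
    exact (indepFun_iff_map_prod_eq_prod_map_map hX.aemeasurable hU.aemeasurable).1 hindep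
  have key : ∀ D : Set ℝ, MeasurableSet D →
      P ({ω | X ω ∈ D} ∩ {ω | X ω + U ω ∈ truncSet a b})
        = ENNReal.ofReal (∫ u in D,
            gaussianPDFReal μ ((σ ^ 2).toNNReal) u * truncSum a b τ u) := by
    intro D hD
    have hSmeas : MeasurableSet {p : ℝ × ℝ | p.1 ∈ D ∧ p.1 + p.2 ∈ truncSet a b} :=
      (measurable_fst hD).inter ((measurable_fst.add measurable_snd) hTmeas)
    have hset : {ω | X ω ∈ D} ∩ {ω | X ω + U ω ∈ truncSet a b}
        = (fun ω => (X ω, U ω)) ⁻¹' {p : ℝ × ℝ | p.1 ∈ D ∧ p.1 + p.2 ∈ truncSet a b} := rfl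
    rw [hset, ← Measure.map_apply (hX.prodMk hU) hSmeas, hmap,
      prod_measure_trunc a b hab μ hσ hτ hD]
  have hPs : P {ω | X ω + U ω ∈ truncSet a b}
      = ENNReal.ofReal (truncSum a b (Real.sqrt (σ ^ 2 + τ ^ 2)) μ) := by
    have h0 := key univ MeasurableSet.univ
    rw [show {ω | X ω ∈ univ} = (univ : Set Ω) from by ext; simp, univ_inter,
      Measure.restrict_univ, conv_truncSum a b μ hσ hτ] at h0
    exact h0
  have hZpos := truncSum_pos a b hab hsq μ
  refine ⟨by rw [hPs]; exact ENNReal.ofReal_pos.2 hZpos, fun x => ?_⟩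
  rw [cond_apply hsmeas P, inter_comm, hPs,
    show {ω | X ω ≤ x} = {ω | X ω ∈ Iic x} from rfl, key (Iic x) measurableSet_Iic]
  have hint_eq : ∫ u in Iic x, condPDF a b σ τ μ u
      = (∫ u in Iic x, gaussianPDFReal μ ((σ ^ 2).toNNReal) u * truncSum a b τ u)
          / truncSum a b (Real.sqrt (σ ^ 2 + τ ^ 2)) μ := by
    rw [← integral_div]
    refine setIntegral_congr_fun measurableSet_Iic fun u _ => ?_
    rw [condPDF, gaussianPDFReal_eq μ σ hσ u]
  rw [hint_eq, ENNReal.ofReal_div_of_pos hZpos, ENNReal.div_eq_inv_mul]
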